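/- Let k > 1, let ε_1,…,ε_k > 0 with Σ ε_i = 1, let μ_1,…,μ_k ∈ ℝ and σ_1,…,σ_k > 0, and let X be distributed as the Gaussian mixture Σ_{i=1}^k ε_i N(μ_i, σ_i²) with E[X] = 0. Then for every s ∈ ℝ, Var|X − s| = Var X + s² − (Σ_{i=1}^k ε_i h(μ_i, σ_i, s))², where h(μ, σ, s) = (s − μ)(2F((s−μ)/σ) − 1) + 2σ f((s−μ)/σ), and f and F denote the probability density function and the cumulative distribution function of the standard normal distribution N(0,1). -/

import Mathlib

open MeasureTheory ProbabilityTheory Real Filter Set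

namespace FoldGaussAux

noncomputable def phi : ℝ → ℝ := gaussianPDFReal 0 1

lemma phi_eq (x : ℝ) : phi x = (√(2*π))⁻¹ * rexp (-(x^2/2)) := by
  simp [phi, gaussianPDFReal, neg_div]

lemma phi_nonneg (x : ℝ) : 0 ≤ phi x := gaussianPDFReal_nonneg 0 1 x

lemma phi_meas : Measurable phi := measurable_gaussianPDFReal 0 1

lemma phi_funeq : phi = fun y => (√(2*π))⁻¹ * rexp (-((1:ℝ)/2) * y^2) := by
  funext y; rw [phi_eq]; ring_nf

lemma phi_hasDeriv (x : ℝ) : HasDerivAt (fun y => -phi y) (x * phi x) x := by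
  have h1 : HasDerivAt (fun y : ℝ => -(y^2/2)) (-x) x := by
    have := ((hasDerivAt_pow 2 x).div_const 2).neg
    simpa [Pi.neg_def] using this
  have h3 := ((h1.exp).const_mul ((√(2*π))⁻¹)).neg
  have he : (fun y => -phi y) = fun y => -((√(2*π))⁻¹ * rexp (-(y^2/2))) := by
    funext y; rw [phi_eq]
  rw [he, phi_eq]
  exact h3.congr_deriv (by ring)

lemma sq_atBot : Tendsto (fun y : ℝ => y^2) atBot atTop := by
  simp only [sq]; exact tendsto_id.atBot_mul_atBot₀ tendsto_id

lemma phi_tendsto_atTop : Tendsto phi atTop (nhds 0) := by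
  have he : phi = fun y => (√(2*π))⁻¹ * rexp (-(y^2/2)) := funext phi_eq
  rw [he, show (0:ℝ) = (√(2*π))⁻¹ * 0 by ring]
  refine Tendsto.const_mul _ (Real.tendsto_exp_atBot.comp ?_)
  exact tendsto_neg_atBot_iff.mpr ((tendsto_pow_atTop two_ne_zero).atTop_div_const (by norm_num))

lemma phi_tendsto_atBot : Tendsto phi atBot (nhds 0) := by
  have he : phi = fun y => (√(2*π))⁻¹ * rexp (-(y^2/2)) := funext phi_eq
  rw [he, show (0:ℝ) = (√(2*π))⁻¹ * 0 by ring]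
  refine Tendsto.const_mul _ (Real.tendsto_exp_atBot.comp ?_)
  exact tendsto_neg_atBot_iff.mpr (sq_atBot.atTop_div_const (by norm_num))

lemma integrable_phi : Integrable phi := integrable_gaussianPDFReal 0 1

lemma integrable_mul_phi : Integrable (fun x => x * phi x) := by
  rw [phi_funeq]
  have := (integrable_mul_exp_neg_mul_sq (b := (1:ℝ)/2) (by norm_num)).const_mul ((√(2*π))⁻¹)
  refine this.congr ?_
  filter_upwards with x; ring_nf

lemma integrable_sq_mul_phi : Integrable (fun x => x^2 * phi x) := by
  rw [phi_funeq]
  have := (integrable_rpow_mul_exp_neg_mul_sq (b := (1:ℝ)/2) (by norm_num) (s := 2)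
    (by norm_num)).const_mul ((√(2*π))⁻¹)
  refine this.congr ?_
  filter_upwards with x
  rw [show ((2:ℝ)) = ((2:ℕ):ℝ) by norm_num, Real.rpow_natCast]
  ring_nf

lemma std_eq_withDensity :
    gaussianReal 0 1 = MeasureTheory.volume.withDensity (fun x => ((phi x).toNNReal : ENNReal)) := by
  rw [gaussianReal_of_var_ne_zero 0 one_ne_zero]
  rfl

lemma integral_std (g : ℝ → ℝ) : ∫ x, g x ∂(gaussianReal 0 1) = ∫ x, phi x * g x := by
  rw [std_eq_withDensity, integral_withDensity_eq_integral_smul (phi_meas.real_toNNReal)]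
  congr 1; funext x
  simp [NNReal.smul_def, Real.coe_toNNReal _ (phi_nonneg x)]

lemma integrable_std_iff (g : ℝ → ℝ) :
    Integrable g (gaussianReal 0 1) ↔ Integrable (fun x => g x * phi x) := by
  rw [std_eq_withDensity]
  rw [integrable_withDensity_iff phi_meas.real_toNNReal.coe_nnreal_ennreal
    (Filter.Eventually.of_forall fun x => ENNReal.coe_lt_top)]
  simp only [ENNReal.coe_toReal, Real.coe_toNNReal _ (phi_nonneg _)]

lemma phi_cont : Continuous (fun y => -phi y) := by
  have : Differentiable ℝ (fun y => -phi y) := fun x => (phi_hasDeriv x).differentiableAt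
  exact this.continuous

lemma integral_Ioi_mul_phi (t : ℝ) : ∫ x in Ioi t, x * phi x = phi t := by
  have hT : Tendsto (fun y => -phi y) atTop (nhds 0) := by simpa using phi_tendsto_atTop.neg
  have h := integral_Ioi_of_hasDerivAt_of_tendsto (a := t) (f := fun y => -phi y)
    (f' := fun x => x * phi x) (phi_cont.continuousWithinAt)
    (fun x _ => phi_hasDeriv x) (integrable_mul_phi.integrableOn) hT
  simpa using h

lemma integral_Iic_mul_phi (t : ℝ) : ∫ x in Iic t, x * phi x = -phi t := by
  have hT : Tendsto (fun y => -phi y) atBot (nhds 0) := by simpa using phi_tendsto_atBot.neg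
  have h := integral_Iic_of_hasDerivAt_of_tendsto (a := t) (f := fun y => -phi y)
    (f' := fun x => x * phi x) (phi_cont.continuousWithinAt)
    (fun x _ => phi_hasDeriv x) (integrable_mul_phi.integrableOn) hT
  simpa using h

lemma integral_Iic_phi (t : ℝ) : ∫ x in Iic t, phi x = cdf (gaussianReal 0 1) t := by
  simp only [phi]
  rw [cdf_eq_real, measureReal_def, gaussianReal_apply_eq_integral 0 one_ne_zero,
    ENNReal.toReal_ofReal (setIntegral_nonneg measurableSet_Iic
      fun x _ => gaussianPDFReal_nonneg 0 1 x)]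

lemma integral_Ioi_phi (t : ℝ) : ∫ x in Ioi t, phi x = 1 - cdf (gaussianReal 0 1) t := by
  have htot : ∫ x, phi x = 1 := integral_gaussianPDFReal_eq_one 0 one_ne_zero
  have h := integral_add_compl (s := Iic t) measurableSet_Iic integrable_phi (f := phi)
  rw [compl_Iic] at h
  rw [← integral_Iic_phi]
  linarith [h.trans htot]

lemma std_abs_integral (t : ℝ) :
    ∫ x, phi x * |x - t| = t * (2 * cdf (gaussianReal 0 1) t - 1) + 2 * phi t := by
  have hint : Integrable (fun x => phi x * |x - t|) := by
    have h := (integrable_mul_phi.sub (integrable_phi.const_mul t)).abs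
    refine h.congr ?_
    filter_upwards with x
    simp only [Pi.sub_apply]
    rw [show x * phi x - t * phi x = (x - t) * phi x by ring, abs_mul,
      abs_of_nonneg (phi_nonneg x)]
    ring
  have hsplit := integral_add_compl (s := Iic t) measurableSet_Iic hint
    (f := fun x => phi x * |x - t|)
  rw [compl_Iic] at hsplit
  have h1 : ∫ x in Iic t, phi x * |x - t| =
      t * cdf (gaussianReal 0 1) t + phi t := by
    have he : ∀ x ∈ Iic t, phi x * |x - t| = t * phi x - x * phi x := by
      intro x hx
      rw [abs_of_nonpos (by simp at hx; linarith)]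
      ring
    rw [setIntegral_congr_fun measurableSet_Iic he, integral_sub
      ((integrable_phi.const_mul t).integrableOn) (integrable_mul_phi.integrableOn),
      integral_const_mul, integral_Iic_phi, integral_Iic_mul_phi]
    ring
  have h2 : ∫ x in Ioi t, phi x * |x - t| =
      phi t - t * (1 - cdf (gaussianReal 0 1) t) := by
    have he : ∀ x ∈ Ioi t, phi x * |x - t| = x * phi x - t * phi x := by
      intro x hx
      rw [abs_of_nonneg (by simp at hx; linarith)]
      ring
    rw [setIntegral_congr_fun measurableSet_Ioi he, integral_sub
      (integrable_mul_phi.integrableOn) ((integrable_phi.const_mul t).integrableOn),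
      integral_const_mul, integral_Ioi_phi, integral_Ioi_mul_phi]
  rw [← hsplit, h1, h2]
  ring

lemma gauss_map (μ σ : ℝ) (hσ : 0 < σ) :
    gaussianReal μ ((σ ^ 2).toNNReal) =
      Measure.map (fun z => σ * z + μ) (gaussianReal 0 1) := by
  have h1 : Measure.map (fun z : ℝ => σ * z) (gaussianReal 0 1)
      = gaussianReal 0 ((σ ^ 2).toNNReal) := by
    rw [gaussianReal_map_const_mul σ]
    congr 1
    · ring
    · ext; simp [Real.coe_toNNReal _ (sq_nonneg σ)]
  have h2 : Measure.map (fun z : ℝ => σ * z + μ) (gaussianReal 0 1)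
      = Measure.map (· + μ) (Measure.map (σ * ·) (gaussianReal 0 1)) := by
    rw [Measure.map_map (by fun_prop) (by fun_prop)]
    rfl
  rw [h2, h1, gaussianReal_map_add_const μ, zero_add]

lemma memLp_std : MeasureTheory.MemLp (fun x : ℝ => x) 2 (gaussianReal 0 1) := by
  rw [memLp_two_iff_integrable_sq (Measurable.aestronglyMeasurable
    (f := fun x : ℝ => x) measurable_id)]
  rw [integrable_std_iff]
  exact integrable_sq_mul_phi

lemma memLp_gauss (μ σ : ℝ) (hσ : 0 < σ) :
    MeasureTheory.MemLp (fun x : ℝ => x) 2 (gaussianReal μ ((σ ^ 2).toNNReal)) := by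
  rw [gauss_map μ σ hσ, memLp_map_measure_iff (Measurable.aestronglyMeasurable
    (f := fun x : ℝ => x) measurable_id) (by fun_prop)]
  exact (memLp_std.const_mul σ).add (memLp_const μ)

end FoldGaussAux

open FoldGaussAux

/-- The function `h(μ, σ, s) = (s - μ)(2 F((s - μ)/σ) - 1) + 2 σ f((s - μ)/σ)`, where `f` and
`F` are the pdf and cdf of the standard normal distribution `N(0, 1)`. -/
noncomputable def foldGauss (μ σ s : ℝ) : ℝ :=
  (s - μ) * (2 * ProbabilityTheory.cdf (ProbabilityTheory.gaussianReal 0 1) ((s - μ) / σ) - 1) +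
    2 * σ * ProbabilityTheory.gaussianPDFReal 0 1 ((s - μ) / σ)

namespace FoldGaussAux

lemma fold_integral (μ σ s : ℝ) (hσ : 0 < σ) :
    ∫ x, |x - s| ∂(gaussianReal μ ((σ ^ 2).toNNReal)) = foldGauss μ σ s := by
  rw [gauss_map μ σ hσ, integral_map (φ := fun z : ℝ => σ * z + μ) (by fun_prop)
    (f := fun x => |x - s|) (Measurable.aestronglyMeasurable (by fun_prop))]
  have he : ∀ z : ℝ, |σ * z + μ - s| = σ * |z - (s - μ) / σ| := by
    intro z
    rw [← abs_of_pos hσ, ← abs_mul, abs_of_pos hσ]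
    congr 1
    field_simp
    ring
  simp_rw [he]
  rw [MeasureTheory.integral_const_mul, integral_std]
  rw [std_abs_integral]
  simp only [foldGauss, phi]
  set u := (s - μ) / σ with hu
  have hσμ : σ * u = s - μ := by rw [hu]; field_simp
  rw [← hσμ]
  ring

end FoldGaussAux

/-- Let `X` follow the Gaussian mixture `Σᵢ εᵢ N(μᵢ, σᵢ²)` with `εᵢ > 0`,
`Σ εᵢ = 1`, `σᵢ > 0`, and `E[X] = 0`. Then for every `s ∈ ℝ`,
`Var |X - s| = Var X + s² - (Σᵢ εᵢ h(μᵢ, σᵢ, s))²`. -/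
theorem stmt_15 (k : ℕ) (hk : 1 < k) (ε μ σ : ℕ → ℝ)
    (hε : ∀ i ∈ Finset.Icc 1 k, 0 < ε i)
    (hsum : ∑ i ∈ Finset.Icc 1 k, ε i = 1)
    (hσ : ∀ i ∈ Finset.Icc 1 k, 0 < σ i)
    (P : Measure ℝ)
    (hP : P = ∑ i ∈ Finset.Icc 1 k, ENNReal.ofReal (ε i) •
      ProbabilityTheory.gaussianReal (μ i) ((σ i) ^ 2).toNNReal)
    (hmean : ∫ x, x ∂P = 0) :
    ∀ s : ℝ, variance (fun x => |x - s|) P =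
      variance (fun x => x) P + s ^ 2 -
        (∑ i ∈ Finset.Icc 1 k, ε i * foldGauss (μ i) (σ i) s) ^ 2 := by
  intro s
  haveI hprob : IsProbabilityMeasure P := by
    constructor
    rw [hP]
    simp only [Measure.finset_sum_apply, Measure.smul_apply, measure_univ, smul_eq_mul, mul_one]
    rw [← ENNReal.ofReal_sum_of_nonneg (fun i hi => (hε i hi).le), hsum, ENNReal.ofReal_one]
  have hM : MemLp (fun x : ℝ => x) 2 P := by
    rw [memLp_two_iff_integrable_sq (Measurable.aestronglyMeasurable
      (f := fun x : ℝ => x) measurable_id), hP, integrable_finset_sum_measure]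
    intro i hi
    exact ((memLp_gauss (μ i) (σ i) (hσ i hi)).integrable_sq).smul_measure ENNReal.ofReal_ne_top
  have hMabs : MemLp (fun x : ℝ => |x - s|) 2 P := (hM.sub (memLp_const s)).abs
  have hX1 : Integrable (fun x : ℝ => x) P := hM.integrable one_le_two
  have hX2 : Integrable (fun x : ℝ => x ^ 2) P := hM.integrable_sq
  have hInti : ∀ i ∈ Finset.Icc 1 k, Integrable (fun x : ℝ => |x - s|)
      (ENNReal.ofReal (ε i) • gaussianReal (μ i) ((σ i) ^ 2).toNNReal) := fun i hi =>
    (((memLp_gauss (μ i) (σ i) (hσ i hi)).sub (memLp_const s)).abs.integrable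
      one_le_two).smul_measure ENNReal.ofReal_ne_top
  have hmix : ∫ x, |x - s| ∂P = ∑ i ∈ Finset.Icc 1 k, ε i * foldGauss (μ i) (σ i) s := by
    rw [hP, integral_finset_sum_measure hInti]
    refine Finset.sum_congr rfl fun i hi => ?_
    rw [integral_smul_measure, ENNReal.toReal_ofReal (hε i hi).le, smul_eq_mul,
      fold_integral (μ i) (σ i) s (hσ i hi)]
  have hsq : ∫ x, |x - s| ^ 2 ∂P = ∫ x, x ^ 2 ∂P + s ^ 2 := by
    have he : (fun x : ℝ => |x - s| ^ 2) = fun x : ℝ => x ^ 2 - (2 * s) * x + s ^ 2 := by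
      funext x; rw [sq_abs]; ring
    have hf : Integrable (fun x : ℝ => x ^ 2 - 2 * s * x) P := hX2.sub (hX1.const_mul (2 * s))
    have hg : Integrable (fun x : ℝ => 2 * s * x) P := hX1.const_mul (2 * s)
    rw [he, integral_add hf (integrable_const _),
      integral_sub hX2 hg, MeasureTheory.integral_const_mul, hmean,
      integral_const, probReal_univ]
    simp
  have hv1 := variance_eq_sub hMabs
  have hv2 := variance_eq_sub hM
  simp only [Pi.pow_apply] at hv1 hv2
  rw [hv1, hv2, hsq, hmix, hmean]
  ring
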